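/- Let q be a complex number with |q| < 1, and let a, c be complex numbers with a ≠ 0 and a avoiding the poles below. For any integers r, s ≥ 0: ∑_{k=0}^{r} [r+s-k choose r-k]_q ((c;q)_k / (-aq;q)_k) q^{(s+1)k} − ((1+a)/(c+a)) ∑_{k=0}^{s} [r+s-k choose s-k]_q ((c;q)_k / (-cq/a;q)_k) (−1/a)^k = (−1/a)^{s+1} (c;q)_{1+r+s} / ((-aq;q)_r (-c/a;q)_{s+1}). -/

import Mathlib

open Finset Complex

/-- finite q-Pochhammer symbol `(x; q)_n` -/
noncomputable def qp (q x : ℂ) (n : ℕ) : ℂ := ∏ j ∈ Finset.range n, (1 - x * q ^ j)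

/-- infinite q-Pochhammer symbol `(x; q)_∞` -/
noncomputable def qpi (q x : ℂ) : ℂ := ∏' j : ℕ, (1 - x * q ^ j)

/-- Gaussian (q-binomial) coefficient -/
noncomputable def qbinom (q : ℂ) (n k : ℕ) : ℂ := qp q q n / (qp q q k * qp q q (n - k))

lemma qp_zero (q x : ℂ) : qp q x 0 = 1 := by simp [qp]

lemma qp_succ (q x : ℂ) (n : ℕ) : qp q x (n+1) = qp q x n * (1 - x * q ^ n) :=
  Finset.prod_range_succ _ _

lemma qp_succ' (q x : ℂ) (n : ℕ) : qp q x (n+1) = (1 - x) * qp q (x*q) n := by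
  rw [qp, Finset.prod_range_succ']
  simp only [pow_zero, mul_one]
  rw [mul_comm]
  congr 1
  · apply Finset.prod_congr rfl
    intro j _
    ring_nf

lemma qp_ne_zero {q x : ℂ} {n : ℕ} (h : ∀ j, j < n → x * q ^ j ≠ 1) : qp q x n ≠ 0 := by
  rw [qp, Finset.prod_ne_zero_iff]
  intro j hj hz
  exact h j (Finset.mem_range.mp hj) (by linear_combination -hz)

lemma one_sub_qpow_ne {q : ℂ} (hq : ‖q‖ < 1) (k : ℕ) : (1 : ℂ) - q * q ^ k ≠ 0 := by
  intro h
  have h1 : q * q ^ k = 1 := by linear_combination -h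
  have h2 : ‖q * q ^ k‖ < 1 := by
    rw [norm_mul, norm_pow]
    calc ‖q‖ * ‖q‖ ^ k ≤ ‖q‖ * 1 := by
          exact mul_le_mul_of_nonneg_left (pow_le_one₀ (norm_nonneg _) hq.le)
            (norm_nonneg _)
      _ = ‖q‖ := mul_one _
      _ < 1 := hq
  rw [h1] at h2
  simp at h2

lemma qp_q_ne_zero {q : ℂ} (hq : ‖q‖ < 1) (n : ℕ) : qp q q n ≠ 0 :=
  qp_ne_zero (fun j _ h => one_sub_qpow_ne hq j (by linear_combination -h))

lemma qbinom_zero {q : ℂ} (hq : ‖q‖ < 1) (n : ℕ) : qbinom q n 0 = 1 := by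
  rw [qbinom, Nat.sub_zero, qp_zero, one_mul, div_self (qp_q_ne_zero hq n)]

lemma qbinom_self {q : ℂ} (hq : ‖q‖ < 1) (n : ℕ) : qbinom q n n = 1 := by
  rw [qbinom, Nat.sub_self, qp_zero, mul_one, div_self (qp_q_ne_zero hq n)]

lemma pascal1 {q : ℂ} (hq : ‖q‖ < 1) (k m : ℕ) :
    qbinom q (k+m+2) (k+1) = qbinom q (k+m+1) k + q^(k+1) * qbinom q (k+m+1) (k+1) := by
  rw [qbinom, qbinom, qbinom, show k+m+2-(k+1) = m+1 by omega, show k+m+1-k = m+1 by omega,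
    show k+m+1-(k+1) = m by omega, show k+m+2 = (k+m+1)+1 by omega, qp_succ q q (k+m+1),
    qp_succ q q k, qp_succ q q m]
  have h1 := qp_q_ne_zero hq k
  have h2 := qp_q_ne_zero hq m
  have h3 := one_sub_qpow_ne hq k
  have h4 := one_sub_qpow_ne hq m
  field_simp
  ring

lemma pascal2 {q : ℂ} (hq : ‖q‖ < 1) (r m : ℕ) :
    qbinom q (r+m+2) (m+1) = q^(r+1) * qbinom q (r+m+1) m + qbinom q (r+m+1) (m+1) := by
  rw [qbinom, qbinom, qbinom, show r+m+2-(m+1) = r+1 by omega, show r+m+1-m = r+1 by omega,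
    show r+m+1-(m+1) = r by omega, show r+m+2 = (r+m+1)+1 by omega, qp_succ q q (r+m+1),
    qp_succ q q m, qp_succ q q r]
  have h1 := qp_q_ne_zero hq r
  have h2 := qp_q_ne_zero hq m
  have h3 := one_sub_qpow_ne hq r
  have h4 := one_sub_qpow_ne hq m
  field_simp
  ring

lemma sumA {q : ℂ} (hq : ‖q‖ < 1) (r s : ℕ) (f : ℕ → ℂ) :
    ∑ k ∈ Finset.range (r+1+1), qbinom q (r+1+(s+1)-k) (r+1-k) * f k * q^((s+1+1)*k)
    = ∑ k ∈ Finset.range (r+1), qbinom q (r+(s+1)-k) (r-k) * f k * q^((s+1+1)*k)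
      + q^(r+1) * ∑ k ∈ Finset.range (r+1+1), qbinom q (r+1+s-k) (r+1-k) * f k * q^((s+1)*k) := by
  rw [Finset.sum_range_succ, Finset.sum_range_succ (f := fun k =>
      qbinom q (r+1+s-k) (r+1-k) * f k * q^((s+1)*k))]
  have key : ∀ k ∈ Finset.range (r+1),
      qbinom q (r+1+(s+1)-k) (r+1-k) * f k * q^((s+1+1)*k)
      = qbinom q (r+(s+1)-k) (r-k) * f k * q^((s+1+1)*k)
        + q^(r+1) * (qbinom q (r+1+s-k) (r+1-k) * f k * q^((s+1)*k)) := by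
    intro k hk
    have hk' : k ≤ r := Nat.lt_succ_iff.mp (Finset.mem_range.mp hk)
    obtain ⟨m, rfl⟩ : ∃ m, r = k + m := ⟨r - k, by omega⟩
    rw [show k+m+1+(s+1)-k = m+s+2 by omega, show k+m+1-k = m+1 by omega,
      show k+m+(s+1)-k = m+s+1 by omega, show k+m-k = m by omega,
      show k+m+1+s-k = m+s+1 by omega, pascal1 hq m s]
    ring
  rw [Finset.sum_congr rfl key, Finset.sum_add_distrib, ← Finset.mul_sum,
    show r+1+(s+1)-(r+1) = s+1 by omega, show r+1-(r+1) = 0 by omega,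
    show r+1+s-(r+1) = s by omega, qbinom_zero hq, qbinom_zero hq]
  ring

lemma sumB {q y : ℂ} (hq : ‖q‖ < 1) (r s : ℕ) (g : ℕ → ℂ) :
    ∑ k ∈ Finset.range (s+1+1), qbinom q (r+1+(s+1)-k) (s+1-k) * g k * y^k
    = ∑ k ∈ Finset.range (s+1+1), qbinom q (r+(s+1)-k) (s+1-k) * g k * y^k
      + q^(r+1) * ∑ k ∈ Finset.range (s+1), qbinom q (r+1+s-k) (s-k) * g k * y^k := by
  rw [Finset.sum_range_succ, Finset.sum_range_succ (f := fun k =>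
      qbinom q (r+(s+1)-k) (s+1-k) * g k * y^k)]
  have key : ∀ k ∈ Finset.range (s+1),
      qbinom q (r+1+(s+1)-k) (s+1-k) * g k * y^k
      = qbinom q (r+(s+1)-k) (s+1-k) * g k * y^k
        + q^(r+1) * (qbinom q (r+1+s-k) (s-k) * g k * y^k) := by
    intro k hk
    have hk' : k ≤ s := Nat.lt_succ_iff.mp (Finset.mem_range.mp hk)
    obtain ⟨m, rfl⟩ : ∃ m, s = k + m := ⟨s - k, by omega⟩
    rw [show r+1+(k+m+1)-k = r+m+2 by omega, show k+m+1-k = m+1 by omega,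
      show r+(k+m+1)-k = r+m+1 by omega, show r+1+(k+m)-k = r+m+1 by omega,
      show k+m-k = m by omega, pascal2 hq r m]
    ring
  rw [Finset.sum_congr rfl key, Finset.sum_add_distrib, ← Finset.mul_sum,
    show r+1+(s+1)-(s+1) = r+1 by omega, show s+1-(s+1) = 0 by omega,
    show r+(s+1)-(s+1) = r by omega, qbinom_zero hq, qbinom_zero hq]
  ring

lemma qpA_ne {q a : ℂ} {N n : ℕ} (hn : n ≤ N+1)
    (hA : ∀ m : ℕ, m ≤ N → a * q ^ (m + 1) ≠ -1) : qp q (-a*q) n ≠ 0 := by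
  apply qp_ne_zero
  intro j hj h
  exact hA j (by omega) (by linear_combination -h)

lemma qpCq_ne {q a c : ℂ} {N n : ℕ} (ha : a ≠ 0) (hn : n ≤ N)
    (hC : ∀ m : ℕ, m ≤ N → c * q ^ m ≠ -a) : qp q (-c*q/a) n ≠ 0 := by
  apply qp_ne_zero
  intro j hj h
  rw [div_mul_eq_mul_div, div_eq_iff ha] at h
  exact hC (j+1) (by omega) (by linear_combination -h)

lemma qpC_ne {q a c : ℂ} {N n : ℕ} (ha : a ≠ 0) (hn : n ≤ N+1)
    (hC : ∀ m : ℕ, m ≤ N → c * q ^ m ≠ -a) : qp q (-c/a) n ≠ 0 := by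
  apply qp_ne_zero
  intro j hj h
  rw [div_mul_eq_mul_div, div_eq_iff ha] at h
  exact hC j (by omega) (by linear_combination -h)

lemma helper1 (q a c : ℂ) (n : ℕ)
    (hA : ∀ m : ℕ, m ≤ n → a * q ^ (m + 1) ≠ -1) :
    (∑ k ∈ Finset.range (n+1), qp q c k / qp q (-a*q) k * q^k) * (c+a)
      = (1+a) - qp q c (n+1) / qp q (-a*q) n := by
  induction n with
  | zero =>
    rw [Finset.sum_range_one, qp_zero, qp_zero, qp_succ, qp_zero]
    simp
    ring
  | succ n ih =>
    rw [Finset.sum_range_succ, add_mul, ih (fun m hm => hA m (by omega))]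
    rw [qp_succ q c (n+1), qp_succ q (-a*q) n,
      show (1:ℂ) - -a*q*q^n = 1 + a*q^(n+1) by ring]
    have h1 : qp q (-a*q) n ≠ 0 := qpA_ne (N := n+1) (by omega) hA
    have h2 : (1:ℂ) + a*q^(n+1) ≠ 0 := fun h => hA n (by omega) (by linear_combination h)
    set D := qp q (-a*q) n with hD
    set A := qp q c (n+1) with hA'
    field_simp
    ring

lemma helper2 (q a c : ℂ) (ha : a ≠ 0) (n : ℕ)
    (hC : ∀ m : ℕ, m ≤ n → c * q ^ m ≠ -a) :
    (1+a) * (∑ k ∈ Finset.range (n+1), qp q c k / qp q (-c*q/a) k * (-1/a)^k)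
    = (c+a) * (1 - (-1/a)^(n+1) * qp q c (n+1) / qp q (-c/a) (n+1)) := by
  have hac : a + c ≠ 0 := by
    intro h
    exact hC 0 (by omega) (by rw [pow_zero, mul_one]; linear_combination h)
  induction n with
  | zero =>
    rw [Finset.sum_range_one, qp_zero, qp_zero, qp_succ, qp_zero, qp_succ, qp_zero]
    rw [show (1:ℂ) - -c/a*q^0 = (a+c)/a by field_simp; ring]
    field_simp
    ring_nf
    field_simp
    ring
  | succ n ih =>
    rw [Finset.sum_range_succ, mul_add, ih (fun m hm => hC m (by omega))]
    have hacq : a + c*q^(n+1) ≠ 0 := by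
      intro h
      exact hC (n+1) (by omega) (by linear_combination h)
    have hrel : qp q (-c/a) (n+1) = ((a+c)/a) * qp q (-c*q/a) n := by
      rw [qp_succ' q (-c/a) n, show (-c/a)*q = -c*q/a by ring,
        show (1:ℂ) - -c/a = (a+c)/a by field_simp; ring]
    have hB1 : qp q (-c*q/a) n ≠ 0 := qpCq_ne ha (by omega) hC
    rw [qp_succ q c (n+1), qp_succ q (-c*q/a) n, qp_succ q (-c/a) (n+1), hrel,
      show (1:ℂ) - -c*q/a*q^n = (a + c*q^(n+1))/a by field_simp; ring,
      show (1:ℂ) - -c/a*q^(n+1) = (a + c*q^(n+1))/a by field_simp; ring]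
    set B := qp q (-c*q/a) n with hB
    set A := qp q c (n+1) with hA'
    field_simp
    ring_nf
    field_simp
    ring

lemma rhs_rec (q a c : ℂ) (ha : a ≠ 0) (r s : ℕ)
    (hA1 : qp q (-a*q) r ≠ 0) (h2 : (1:ℂ) + a*q^(r+1) ≠ 0)
    (hC1 : qp q (-c/a) (s+1) ≠ 0) (h4 : a + c*q^(s+1) ≠ 0) :
    (-1/a)^(s+1+1) * qp q c (1+(r+1)+(s+1)) / (qp q (-a*q) (r+1) * qp q (-c/a) (s+1+1))
    = (-1/a)^(s+1+1) * qp q c (1+r+(s+1)) / (qp q (-a*q) r * qp q (-c/a) (s+1+1))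
      + q^(r+1) * ((-1/a)^(s+1) * qp q c (1+(r+1)+s) / (qp q (-a*q) (r+1) * qp q (-c/a) (s+1))) := by
  rw [show 1+(r+1)+(s+1) = (r+s+2)+1 by omega, show 1+r+(s+1) = r+s+2 by omega,
    show 1+(r+1)+s = r+s+2 by omega, qp_succ q c (r+s+2), qp_succ q (-a*q) r,
    qp_succ q (-c/a) (s+1)]
  have heA : (1:ℂ) - -a*q*q^r ≠ 0 := fun h => h2 (by linear_combination h)
  have heC : (1:ℂ) - -c/a*q^(s+1) ≠ 0 := by
    intro h
    apply h4
    have hh : ((1:ℂ) - -c/a*q^(s+1)) * a = a + c*q^(s+1) := by field_simp; ring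
    rw [h, zero_mul] at hh
    exact hh.symm
  set eA := (1:ℂ) - -a*q*q^r with heAdef
  set eC := (1:ℂ) - -c/a*q^(s+1) with heCdef
  set DA := qp q (-a*q) r with hDA
  set DC := qp q (-c/a) (s+1) with hDC
  set P := qp q c (r+s+2) with hP
  have hd2 : DA * (DC * eC) ≠ 0 := mul_ne_zero hA1 (mul_ne_zero hC1 heC)
  have hd3 : DA * eA * DC ≠ 0 := mul_ne_zero (mul_ne_zero hA1 heA) hC1
  have hd1 : DA * eA * (DC * eC) ≠ 0 := mul_ne_zero (mul_ne_zero hA1 heA) (mul_ne_zero hC1 heC)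
  rw [pow_succ, ← mul_div_assoc (a := q^(r+1)), div_add_div _ _ hd2 hd3,
    div_eq_div_iff hd1 (mul_ne_zero hd2 hd3)]
  set Y := ((-1:ℂ)/a)^(s+1) with hY
  rw [heCdef]
  field_simp
  ring

theorem stmt_3 (q a c : ℂ) (r s : ℕ) (hq : ‖q‖ < 1) (ha : a ≠ 0)
    (hA : ∀ m : ℕ, m ≤ r → a * q ^ (m + 1) ≠ -1)
    (hC : ∀ m : ℕ, m ≤ s → c * q ^ m ≠ -a) :
    ∑ k ∈ Finset.range (r + 1),
        qbinom q (r + s - k) (r - k) * (qp q c k / qp q (-a * q) k) * q ^ ((s + 1) * k) -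
      (1 + a) / (c + a) * ∑ k ∈ Finset.range (s + 1),
        qbinom q (r + s - k) (s - k) * (qp q c k / qp q (-c * q / a) k) * (-1 / a) ^ k =
      (-1 / a) ^ (s + 1) * qp q c (1 + r + s) / (qp q (-a * q) r * qp q (-c / a) (s + 1)) := by
  induction r generalizing s hC with
  | zero =>
    have hca : c + a ≠ 0 := fun h => hC 0 (by omega) (by rw [pow_zero, mul_one]; linear_combination h)
    -- first sum is 1
    have hS1 : ∑ k ∈ Finset.range (0 + 1),
        qbinom q (0 + s - k) (0 - k) * (qp q c k / qp q (-a * q) k) * q ^ ((s + 1) * k) = 1 := by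
      rw [show (0:ℕ)+1 = 1 from rfl, Finset.sum_range_one]
      simp [qp_zero, qbinom_zero hq]
    have hS2 : ∑ k ∈ Finset.range (s + 1),
        qbinom q (0 + s - k) (s - k) * (qp q c k / qp q (-c * q / a) k) * (-1 / a) ^ k
        = ∑ k ∈ Finset.range (s + 1), qp q c k / qp q (-c*q/a) k * (-1/a)^k := by
      apply Finset.sum_congr rfl
      intro k hk
      rw [show 0 + s - k = s - k by omega, qbinom_self hq, one_mul]
    rw [hS1, hS2]
    have H := helper2 q a c ha s hC
    have key : (1 + a) / (c + a) * ∑ k ∈ Finset.range (s + 1),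
        qp q c k / qp q (-c*q/a) k * (-1/a)^k
        = 1 - (-1/a)^(s+1) * qp q c (s+1) / qp q (-c/a) (s+1) := by
      rw [div_mul_eq_mul_div, H]
      exact mul_div_cancel_left₀ _ hca
    rw [key, show 1 + 0 + s = s + 1 by omega, qp_zero, one_mul]
    ring
  | succ r ihr =>
    induction s with
    | zero =>
      have hca : c + a ≠ 0 :=
        fun h => hC 0 (by omega) (by rw [pow_zero, mul_one]; linear_combination h)
      have hDA : qp q (-a*q) (r+1) ≠ 0 := qpA_ne (N := r+1) (by omega) hA
      have hS1 : ∑ k ∈ Finset.range (r + 1 + 1),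
          qbinom q (r + 1 + 0 - k) (r + 1 - k) * (qp q c k / qp q (-a * q) k) * q ^ ((0 + 1) * k)
          = ∑ k ∈ Finset.range (r + 1 + 1), qp q c k / qp q (-a*q) k * q^k := by
        apply Finset.sum_congr rfl
        intro k hk
        have hk' : k ≤ r + 1 := Nat.lt_succ_iff.mp (Finset.mem_range.mp hk)
        rw [show r + 1 + 0 - k = r + 1 - k by omega, qbinom_self hq, one_mul,
          show (0+1)*k = k by omega]
      have hS2 : ∑ k ∈ Finset.range (0 + 1),
          qbinom q (r + 1 + 0 - k) (0 - k) * (qp q c k / qp q (-c * q / a) k) * (-1 / a) ^ k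
          = 1 := by
        rw [show (0:ℕ)+1 = 1 from rfl, Finset.sum_range_one]
        simp [qp_zero, qbinom_zero hq]
      rw [hS1, hS2, mul_one]
      have H := helper1 q a c (r+1) hA
      have hSval : ∑ k ∈ Finset.range (r + 1 + 1), qp q c k / qp q (-a*q) k * q^k
          = ((1+a) - qp q c (r+1+1) / qp q (-a*q) (r+1)) / (c+a) := by
        rw [eq_div_iff hca]
        exact H
      rw [hSval, show 1 + (r+1) + 0 = r+1+1 by omega, qp_succ q (-c/a) 0, qp_zero, one_mul,
        pow_zero, mul_one, show (1:ℂ) - -c/a = (a+c)/a by field_simp; ring]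
      set D := qp q (-a*q) (r+1) with hD
      set T := qp q c (r+1+1) with hT
      have hac : a + c ≠ 0 := fun h => hca (by linear_combination h)
      field_simp
      ring_nf
      field_simp
      ring
    | succ s ihs =>
      have ih1 := ihr (s+1) (fun m hm => hA m (by omega)) hC
      have ih2 := ihs (fun m hm => hC m (by omega))
      have hDA : qp q (-a*q) r ≠ 0 := qpA_ne (N := r+1) (by omega) hA
      have h2 : (1:ℂ) + a*q^(r+1) ≠ 0 := fun h => hA r (by omega) (by linear_combination h)
      have hDC : qp q (-c/a) (s+1) ≠ 0 := qpC_ne (N := s+1) ha (by omega) hC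
      have h4 : a + c*q^(s+1) ≠ 0 := fun h => hC (s+1) (by omega) (by linear_combination h)
      have SA := sumA hq r s (fun k => qp q c k / qp q (-a * q) k)
      have SB := sumB (y := -1/a) hq r s (fun k => qp q c k / qp q (-c * q / a) k)
      rw [show r + 1 + (s + 1) = r + 1 + (s + 1) from rfl] at SA
      rw [SA, SB, rhs_rec q a c ha r s hDA h2 hDC h4]
      linear_combination ih1 + q^(r+1) * ih2
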